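/- Let f_n(x) = Σ_{i=0}^n C(n,i) a_i x^i with a_0, …, a_n i.i.d. standard normal. Then liminf_{n → ∞} (1/√n) log P(f_n(x) > 0 for all x ∈ (0, (log n)/(6n))) ≥ 0. -/

import Mathlib

open MeasureTheory ProbabilityTheory Filter Real Topology
open scoped ENNReal NNReal

section aux10

lemma gauss_Ioi_lb {M : ℝ} (hM : 0 ≤ M) :
    rexp (-(M+1)^2/2) / Real.sqrt (2*π) ≤ (gaussianReal 0 1 (Set.Ioi M)).toReal := by
  have hpdf : ∀ x : ℝ, gaussianPDFReal 0 1 x = (Real.sqrt (2*π))⁻¹ * rexp (-x^2/2) := by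
    intro x; simp [gaussianPDFReal]
  have hnn : 0 ≤ ∫ x in Set.Ioc M (M+1), gaussianPDFReal 0 1 x :=
    setIntegral_nonneg measurableSet_Ioc fun x _ => gaussianPDFReal_nonneg _ _ _
  have hInt : rexp (-(M+1)^2/2) / Real.sqrt (2*π)
      ≤ ∫ x in Set.Ioc M (M+1), gaussianPDFReal 0 1 x := by
    have hmono : ∫ x in Set.Ioc M (M+1), (Real.sqrt (2*π))⁻¹ * rexp (-(M+1)^2/2)
        ≤ ∫ x in Set.Ioc M (M+1), gaussianPDFReal 0 1 x := by
      apply setIntegral_mono_on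
      · exact integrableOn_const measure_Ioc_lt_top.ne
      · exact (integrable_gaussianPDFReal 0 1).integrableOn
      · exact measurableSet_Ioc
      · intro x hx
        rw [hpdf]
        apply mul_le_mul_of_nonneg_left _ (inv_nonneg.2 (Real.sqrt_nonneg _))
        apply Real.exp_le_exp.2
        have h1 := hx.1; have h2 := hx.2
        nlinarith
    calc rexp (-(M+1)^2/2) / Real.sqrt (2*π)
        = ∫ _x in Set.Ioc M (M+1), (Real.sqrt (2*π))⁻¹ * rexp (-(M+1)^2/2) := by
          rw [setIntegral_const, Real.volume_real_Ioc]
          simp [div_eq_inv_mul]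
      _ ≤ _ := hmono
  calc rexp (-(M+1)^2/2) / Real.sqrt (2*π)
      ≤ (gaussianReal 0 1 (Set.Ioc M (M+1))).toReal := by
        rw [gaussianReal_apply_eq_integral 0 one_ne_zero, ENNReal.toReal_ofReal hnn]
        exact hInt
    _ ≤ (gaussianReal 0 1 (Set.Ioi M)).toReal :=
        ENNReal.toReal_mono (measure_ne_top _ _) (measure_mono Set.Ioc_subset_Ioi_self)

lemma gauss_tail_ub {t : ℝ} (ht : 1 ≤ t) :
    (gaussianReal 0 1 (Set.Iic (-t))).toReal ≤ rexp (-t^2/2) := by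
  have hpdf : ∀ x : ℝ, gaussianPDFReal 0 1 x = (Real.sqrt (2*π))⁻¹ * rexp (-x^2/2) := by
    intro x; simp [gaussianPDFReal]
  have hderiv : ∀ x : ℝ, HasDerivAt (fun y : ℝ => rexp (-y^2/2)) (rexp (-x^2/2) * (-x)) x := by
    intro x
    have h1 : HasDerivAt (fun y : ℝ => -y^2/2) (-x) x := by
      have h := ((hasDerivAt_pow 2 x).neg.div_const 2)
      norm_num at h
      refine h.congr_deriv ?_
      ring
    exact h1.exp
  have htends : Tendsto (fun y : ℝ => rexp (-y^2/2)) atBot (𝓝 0) := by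
    apply Real.tendsto_exp_atBot.comp
    have h2 : Tendsto (fun y : ℝ => y^2) atBot atTop := by
      have := (tendsto_pow_atTop (α := ℝ) (n := 2) two_ne_zero).comp
        (show Tendsto (fun y : ℝ => -y) atBot atTop from tendsto_neg_atBot_atTop)
      refine this.congr fun y => by simp [Function.comp]
    exact (tendsto_neg_atTop_atBot.comp h2).atBot_div_const (by norm_num)
  have hint : IntegrableOn (fun x : ℝ => rexp (-x^2/2) * (-x)) (Set.Iic (-t)) := by
    have := (integrable_mul_exp_neg_mul_sq (b := 1/2) (by norm_num)).neg
    apply Integrable.integrableOn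
    refine this.congr ?_
    refine ae_of_all _ fun x => by simp; ring_nf
  have hFTC : ∫ x in Set.Iic (-t), rexp (-x^2/2) * (-x) = rexp (-t^2/2) := by
    have := integral_Iic_of_hasDerivAt_of_tendsto' (f := fun y : ℝ => rexp (-y^2/2))
      (f' := fun x : ℝ => rexp (-x^2/2) * (-x)) (a := -t)
      (fun x _ => hderiv x) hint htends
    rw [this]; ring_nf
  have key : ∫ x in Set.Iic (-t), gaussianPDFReal 0 1 x ≤ rexp (-t^2/2) := by
    rw [← hFTC]
    apply setIntegral_mono_on
    · exact (integrable_gaussianPDFReal 0 1).integrableOn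
    · exact hint
    · exact measurableSet_Iic
    · intro x hx
      rw [hpdf]
      have hx' : 1 ≤ -x := le_trans ht (by linarith [hx.out])
      have hinv : (Real.sqrt (2*π))⁻¹ ≤ 1 := by
        rw [inv_le_one_iff₀]
        right
        rw [show (1:ℝ) = Real.sqrt 1 by simp]
        exact Real.sqrt_le_sqrt (by nlinarith [Real.pi_gt_three])
      calc (Real.sqrt (2*π))⁻¹ * rexp (-x^2/2) ≤ 1 * rexp (-x^2/2) :=
            mul_le_mul_of_nonneg_right hinv (Real.exp_nonneg _)
        _ ≤ rexp (-x^2/2) * (-x) := by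
            rw [one_mul]
            nth_rewrite 1 [← mul_one (rexp (-x^2/2))]
            exact mul_le_mul_of_nonneg_left hx' (Real.exp_nonneg _)
  rw [gaussianReal_apply_eq_integral 0 one_ne_zero,
    ENNReal.toReal_ofReal (setIntegral_nonneg measurableSet_Iic fun x _ =>
      gaussianPDFReal_nonneg _ _ _)]
  exact key

lemma gauss_Ioi_neg_lb {t : ℝ} (ht : 1 ≤ t) :
    1 - rexp (-t^2/2) ≤ (gaussianReal 0 1 (Set.Ioi (-t))).toReal := by
  have tail := gauss_tail_ub ht
  have hcompl : (gaussianReal 0 1 (Set.Iic (-t))).toReal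
      + (gaussianReal 0 1 (Set.Ioi (-t))).toReal = 1 := by
    rw [← ENNReal.toReal_add (measure_ne_top _ _) (measure_ne_top _ _),
      ← measure_union (Set.Iic_disjoint_Ioi le_rfl) measurableSet_Ioi,
      Set.Iic_union_Ioi, measure_univ, ENNReal.toReal_one]
  linarith

lemma incl10 {n : ℕ} (hn : 3 ≤ n) {t : ℝ} (ht : 0 < t) (a : Fin (n+1) → ℝ)
    (h0 : t * rexp (Real.log n / 6) < a 0) (hi : ∀ i : Fin n, -t < a i.succ) :
    ∀ x : ℝ, 0 < x → x < Real.log n / (6 * n) →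
      0 < ∑ i : Fin (n + 1), (n.choose i : ℝ) * a i * x ^ (i : ℕ) := by
  intro x hx hxu
  have hn0 : (0:ℝ) < n := by positivity
  have hnx : (n:ℝ) * x < Real.log n / 6 := by
    rw [div_mul_eq_div_div] at hxu
    calc (n:ℝ) * x < (n:ℝ) * (Real.log n / 6 / n) := by
          exact mul_lt_mul_of_pos_left hxu hn0
      _ = Real.log n / 6 := by
          field_simp
  have hterm : ∀ i : Fin n, ((n.choose (i.succ : ℕ) : ℝ)) * x ^ ((i:ℕ)+1)
      ≤ ((n:ℝ)*x) ^ ((i:ℕ)+1) / ((((i:ℕ)+1).factorial : ℕ) : ℝ) := by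
    intro i
    rw [le_div_iff₀ (by positivity), mul_pow]
    rw [show (n:ℝ)^((i:ℕ)+1) * x^((i:ℕ)+1) = x^((i:ℕ)+1) * (n:ℝ)^((i:ℕ)+1) by ring,
      mul_comm ((n.choose (i.succ:ℕ) : ℝ)) (x ^ ((i:ℕ)+1)), mul_assoc]
    apply mul_le_mul_of_nonneg_left _ (by positivity)
    have := Nat.descFactorial_le_pow n ((i:ℕ)+1)
    rw [Nat.descFactorial_eq_factorial_mul_choose] at this
    have h2 : (((((i:ℕ)+1).factorial) * n.choose ((i:ℕ)+1) : ℕ) : ℝ) ≤ ((n ^ ((i:ℕ)+1) : ℕ) : ℝ) :=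
      Nat.cast_le.2 this
    push_cast at h2
    calc (n.choose (i.succ : ℕ) : ℝ) * ((((i:ℕ)+1).factorial : ℕ) : ℝ)
        = (((((i:ℕ)+1).factorial : ℕ) : ℝ) * (n.choose ((i:ℕ)+1) : ℝ)) := by
          rw [Fin.val_succ]; ring
      _ ≤ (n:ℝ)^((i:ℕ)+1) := h2
  have hsum : ∑ i : Fin n, ((n.choose (i.succ : ℕ) : ℝ)) * x ^ ((i:ℕ)+1)
      ≤ rexp (Real.log n / 6) - 1 := by
    calc ∑ i : Fin n, ((n.choose (i.succ : ℕ) : ℝ)) * x ^ ((i:ℕ)+1)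
        ≤ ∑ i : Fin n, ((n:ℝ)*x) ^ ((i:ℕ)+1) / ((((i:ℕ)+1).factorial : ℕ) : ℝ) :=
          Finset.sum_le_sum fun i _ => hterm i
      _ = ∑ i ∈ Finset.range n, ((n:ℝ)*x) ^ (i+1) / (((i+1).factorial : ℕ) : ℝ) := by
          rw [Finset.sum_range fun i => ((n:ℝ)*x) ^ (i+1) / (((i+1).factorial : ℕ) : ℝ)]
      _ = ∑ i ∈ Finset.range (n+1), ((n:ℝ)*x) ^ i / ((i.factorial : ℕ) : ℝ) - 1 := by
          rw [Finset.sum_range_succ' (fun i => ((n:ℝ)*x) ^ i / ((i.factorial : ℕ) : ℝ)) n]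
          simp
      _ ≤ rexp ((n:ℝ)*x) - 1 := by
          have := Real.sum_le_exp_of_nonneg (x := (n:ℝ)*x) (by positivity) (n+1)
          linarith
      _ ≤ rexp (Real.log n / 6) - 1 := by
          have := Real.exp_le_exp.2 hnx.le
          linarith
  rw [Fin.sum_univ_succ]
  have hlow : ∀ i : Fin n, (-t) * ((n.choose (i.succ : ℕ) : ℝ) * x ^ ((i:ℕ)+1))
      ≤ (n.choose (i.succ : ℕ) : ℝ) * a i.succ * x ^ ((i.succ:ℕ)) := by
    intro i
    rw [Fin.val_succ]
    have hc : (0:ℝ) ≤ (n.choose ((i:ℕ)+1) : ℝ) * x ^ ((i:ℕ)+1) := by positivity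
    calc (-t) * ((n.choose (i.succ : ℕ) : ℝ) * x ^ ((i:ℕ)+1))
        = ((n.choose ((i:ℕ)+1) : ℝ) * x ^ ((i:ℕ)+1)) * (-t) := by rw [Fin.val_succ]; ring
      _ ≤ ((n.choose ((i:ℕ)+1) : ℝ) * x ^ ((i:ℕ)+1)) * a i.succ :=
          mul_le_mul_of_nonneg_left (hi i).le hc
      _ = (n.choose ((i:ℕ)+1) : ℝ) * a i.succ * x ^ ((i:ℕ)+1) := by ring
  have hsum2 : (-t) * (rexp (Real.log n / 6) - 1)
      ≤ ∑ i : Fin n, (n.choose (i.succ : ℕ) : ℝ) * a i.succ * x ^ ((i.succ:ℕ)) := by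
    calc (-t) * (rexp (Real.log n / 6) - 1)
        ≤ (-t) * ∑ i : Fin n, ((n.choose (i.succ : ℕ) : ℝ)) * x ^ ((i:ℕ)+1) := by
          apply mul_le_mul_of_nonpos_left hsum (by linarith)
      _ = ∑ i : Fin n, (-t) * (((n.choose (i.succ : ℕ) : ℝ)) * x ^ ((i:ℕ)+1)) := by
          rw [Finset.mul_sum]
      _ ≤ _ := Finset.sum_le_sum fun i _ => hlow i
  have h00 : (n.choose (0:Fin (n+1)) : ℝ) * a 0 * x ^ ((0:Fin (n+1)):ℕ) = a 0 := by
    simp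
  rw [h00]
  have hexp1 : (1:ℝ) ≤ rexp (Real.log n / 6) := by
    rw [← Real.exp_zero]
    apply Real.exp_le_exp.2
    have : (0:ℝ) ≤ Real.log n := Real.log_nonneg (by exact_mod_cast Nat.one_le_of_lt hn)
    linarith
  nlinarith [hsum2, h0, ht]

lemma log_one_sub_ge {q : ℝ} (h0 : 0 ≤ q) (h2 : q ≤ 1/2) : -2*q ≤ Real.log (1-q) := by
  have hq1 : 0 < 1 - q := by linarith
  have h1 : rexp (-2*q) ≤ 1 - q := by
    have he : 1 + 2*q ≤ rexp (2*q) := by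
      have := Real.add_one_le_exp (2*q)
      linarith
    have hrpos : (0:ℝ) < 1 + 2*q := by linarith
    have : (1:ℝ) ≤ (1 - q) * rexp (2*q) := by
      calc (1:ℝ) ≤ (1 - q) * (1 + 2*q) := by nlinarith
        _ ≤ (1 - q) * rexp (2*q) := mul_le_mul_of_nonneg_left he (by linarith)
    rw [show (-2*q : ℝ) = -(2*q) by ring, Real.exp_neg]
    rw [inv_le_iff_one_le_mul₀ (Real.exp_pos _)]
    linarith [this]
  calc -2*q = Real.log (rexp (-2*q)) := (Real.log_exp _).symm
    _ ≤ Real.log (1-q) := Real.log_le_log (Real.exp_pos _) h1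

lemma psi_tendsto10 (c : ℝ) :
    Tendsto (fun L : ℝ => ((Real.sqrt (6*L) * rexp (L/6) + 1)^2/2 + c) * rexp (-(L/2)))
      atTop (𝓝 0) := by
  have T1 : Tendsto (fun L : ℝ => L * rexp (-(1/6)*L)) atTop (𝓝 0) := by
    have := tendsto_rpow_mul_exp_neg_mul_atTop_nhds_zero 1 (1/6) (by norm_num)
    exact this.congr fun x => by rw [Real.rpow_one]
  have T1' : Tendsto (fun L : ℝ => L * rexp (-(1/3)*L)) atTop (𝓝 0) := by
    have := tendsto_rpow_mul_exp_neg_mul_atTop_nhds_zero 1 (1/3) (by norm_num)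
    exact this.congr fun x => by rw [Real.rpow_one]
  have Texp : ∀ b : ℝ, 0 < b → Tendsto (fun L : ℝ => rexp (-b*L)) atTop (𝓝 0) := by
    intro b hb
    apply Real.tendsto_exp_atBot.comp
    exact (tendsto_const_mul_atBot_of_neg (by linarith : -b < 0)).2
      (tendsto_id : Tendsto (fun L : ℝ => L) atTop atTop)
  have T2 : Tendsto (fun L : ℝ => Real.sqrt (6*L) * rexp (-(1/3)*L)) atTop (𝓝 0) := by
    have hup : Tendsto (fun L : ℝ => 6*(L * rexp (-(1/3)*L)) + rexp (-(1/3)*L)) atTop (𝓝 0) := by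
      have := (T1'.const_mul 6).add (Texp (1/3) (by norm_num))
      simpa using this
    apply tendsto_of_tendsto_of_tendsto_of_le_of_le' tendsto_const_nhds hup
    · filter_upwards with L
      positivity
    · filter_upwards [eventually_ge_atTop (1:ℝ)] with L hL
      have h1 : Real.sqrt (6*L) ≤ 6*L := by
        calc Real.sqrt (6*L) ≤ Real.sqrt ((6*L)^2) := Real.sqrt_le_sqrt (by nlinarith)
          _ = 6*L := Real.sqrt_sq (by linarith)
      calc Real.sqrt (6*L) * rexp (-(1/3)*L) ≤ (6*L) * rexp (-(1/3)*L) :=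
            mul_le_mul_of_nonneg_right h1 (Real.exp_nonneg _)
        _ = 6*(L * rexp (-(1/3)*L)) := by ring
        _ ≤ 6*(L * rexp (-(1/3)*L)) + rexp (-(1/3)*L) := by
            linarith [Real.exp_nonneg (-(1/3)*L)]
  have key : Tendsto (fun L : ℝ => 3*(L * rexp (-(1/6)*L)) + Real.sqrt (6*L) * rexp (-(1/3)*L)
      + (1/2 + c) * rexp (-(1/2)*L)) atTop (𝓝 0) := by
    have := ((T1.const_mul 3).add T2).add ((Texp (1/2) (by norm_num)).const_mul (1/2+c))
    simpa using this
  apply key.congr'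
  filter_upwards [eventually_ge_atTop (0:ℝ)] with L hL
  have hs : Real.sqrt (6*L) ^ 2 = 6*L := Real.sq_sqrt (by linarith)
  rw [show rexp (-(1/6)*L) = rexp (L/6) * rexp (L/6) * rexp (-(L/2)) by
        rw [← Real.exp_add, ← Real.exp_add]; ring_nf,
      show rexp (-(1/3)*L) = rexp (L/6) * rexp (-(L/2)) by rw [← Real.exp_add]; ring_nf,
      show rexp (-(1/2)*L) = rexp (-(L/2)) by ring_nf]
  linear_combination (-1/2 * rexp (L/6)^2 * rexp (-(L/2))) * hs

end aux10

set_option maxHeartbeats 1600000 in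
/-- with `a_0, …, a_n` i.i.d. standard normal,
`liminf_{n→∞} (1/√n) log P(f_n(x) > 0 ∀ x ∈ (0, (log n)/(6n))) ≥ 0`. -/
theorem stmt_10 :
    0 ≤ Filter.liminf (fun n : ℕ =>
        Real.log ((Measure.pi fun _ : Fin (n + 1) => gaussianReal 0 1)
            {a : Fin (n + 1) → ℝ | ∀ x : ℝ, 0 < x → x < Real.log n / (6 * n) →
              0 < ∑ i : Fin (n + 1), (n.choose i : ℝ) * a i * x ^ (i : ℕ)}).toReal /
          Real.sqrt n)
      Filter.atTop := by
  set c : ℝ := Real.log (Real.sqrt (2*π)) + 2 with hc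
  set g : ℕ → ℝ := fun n =>
    (Real.sqrt (6*Real.log n) * rexp (Real.log n/6) + 1)^2/2 + c with hg
  set f : ℕ → ℝ := fun n =>
    Real.log ((Measure.pi fun _ : Fin (n + 1) => gaussianReal 0 1)
        {a : Fin (n + 1) → ℝ | ∀ x : ℝ, 0 < x → x < Real.log n / (6 * n) →
          0 < ∑ i : Fin (n + 1), (n.choose i : ℝ) * a i * x ^ (i : ℕ)}).toReal /
      Real.sqrt n with hf
  have hcpos : 0 < c := by
    have : 0 ≤ Real.log (Real.sqrt (2*π)) := by
      apply Real.log_nonneg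
      rw [show (1:ℝ) = Real.sqrt 1 by simp]
      exact Real.sqrt_le_sqrt (by nlinarith [Real.pi_gt_three])
    simp only [hc]; linarith
  -- the lower bound sequence tends to 0
  have hlow : Tendsto (fun n : ℕ => -(g n / Real.sqrt n)) atTop (𝓝 0) := by
    have hcomp : Tendsto (fun n : ℕ => Real.log n) atTop atTop :=
      Real.tendsto_log_atTop.comp tendsto_natCast_atTop_atTop
    have h1 : Tendsto (fun n : ℕ =>
        ((Real.sqrt (6*Real.log n) * rexp (Real.log n/6) + 1)^2/2 + c)
          * rexp (-(Real.log n/2))) atTop (𝓝 0) :=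
      (psi_tendsto10 c).comp hcomp
    have h2 : Tendsto (fun n : ℕ => g n / Real.sqrt n) atTop (𝓝 0) := by
      apply h1.congr'
      filter_upwards [eventually_ge_atTop 1] with n hn
      have hn0 : (0:ℝ) < n := by positivity
      have hsqrt : Real.sqrt n = rexp (Real.log n / 2) := by
        rw [← Real.exp_log (Real.sqrt_pos.2 hn0), Real.log_sqrt hn0.le]
      rw [hg]
      simp only
      rw [hsqrt, Real.exp_neg, div_eq_mul_inv]
      ring
    simpa using h2.neg
  -- squeeze
  have key : Tendsto f atTop (𝓝 0) := by
    apply tendsto_of_tendsto_of_tendsto_of_le_of_le' hlow tendsto_const_nhds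
    · -- lower bound, the main estimate
      filter_upwards [eventually_ge_atTop 3] with n hn
      have hn3 : (3:ℝ) ≤ n := by exact_mod_cast hn
      have hn0 : (0:ℝ) < n := by linarith
      have hL1 : 1 ≤ Real.log n := by
        calc (1:ℝ) ≤ Real.log 3 := by
              rw [Real.le_log_iff_exp_le (by norm_num)]
              calc rexp 1 ≤ 2.7182818286 := Real.exp_one_lt_d9.le
                _ ≤ 3 := by norm_num
          _ ≤ Real.log n := Real.log_le_log (by norm_num) hn3
      set t : ℝ := Real.sqrt (6 * Real.log n) with htdef
      have ht1 : 1 ≤ t := by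
        rw [htdef, show (1:ℝ) = Real.sqrt 1 by simp]
        exact Real.sqrt_le_sqrt (by linarith)
      have ht0 : 0 < t := by linarith
      set M : ℝ := t * rexp (Real.log n / 6) with hMdef
      have hM0 : 0 ≤ M := by positivity
      set s : Fin (n+1) → Set ℝ := fun i => if i = 0 then Set.Ioi M else Set.Ioi (-t)
        with hsdef
      set T : Set (Fin (n+1) → ℝ) :=
        {a : Fin (n + 1) → ℝ | ∀ x : ℝ, 0 < x → x < Real.log n / (6 * n) →
          0 < ∑ i : Fin (n + 1), (n.choose i : ℝ) * a i * x ^ (i : ℕ)} with hTdef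
      have hsub : Set.univ.pi s ⊆ T := by
        intro a ha
        refine incl10 hn ht0 a ?_ ?_
        · have := ha 0 trivial
          simpa [hsdef] using this
        · intro i
          have := ha i.succ trivial
          simpa [hsdef, Fin.succ_ne_zero i] using this
      have hprod : (Measure.pi fun _ : Fin (n+1) => gaussianReal 0 1) (Set.univ.pi s)
          = gaussianReal 0 1 (Set.Ioi M) * (gaussianReal 0 1 (Set.Ioi (-t)))^n := by
        rw [Measure.pi_pi]
        rw [Fin.prod_univ_succ]
        simp [hsdef, Fin.succ_ne_zero]
      set A : ℝ := (gaussianReal 0 1 (Set.Ioi M)).toReal with hAdef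
      set B : ℝ := (gaussianReal 0 1 (Set.Ioi (-t))).toReal with hBdef
      have hPA : A * B^n ≤ ((Measure.pi fun _ : Fin (n+1) => gaussianReal 0 1) T).toReal := by
        have hmono : (Measure.pi fun _ : Fin (n+1) => gaussianReal 0 1) (Set.univ.pi s)
            ≤ (Measure.pi fun _ : Fin (n+1) => gaussianReal 0 1) T := measure_mono hsub
        have := ENNReal.toReal_mono (measure_ne_top _ _) hmono
        rw [hprod, ENNReal.toReal_mul, ENNReal.toReal_pow] at this
        exact this
      have hA : rexp (-(M+1)^2/2) / Real.sqrt (2*π) ≤ A := gauss_Ioi_lb hM0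
      have hB : 1 - rexp (-t^2/2) ≤ B := gauss_Ioi_neg_lb ht1
      have hq : rexp (-t^2/2) = ((n:ℝ)^3)⁻¹ := by
        rw [htdef, Real.sq_sqrt (by linarith : (0:ℝ) ≤ 6 * Real.log n)]
        rw [show -(6 * Real.log n)/2 = -(3 * Real.log n) by ring,
          show (3:ℝ) * Real.log n = Real.log ((n:ℝ)^3) by rw [Real.log_pow]; norm_num,
          Real.exp_neg, Real.exp_log (by positivity)]
      have hn3inv : ((n:ℝ)^3)⁻¹ ≤ 1/2 := by
        rw [inv_le_comm₀ (by positivity) (by norm_num)]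
        have h27 : (3:ℝ)^3 ≤ (n:ℝ)^3 := pow_le_pow_left₀ (by norm_num) hn3 3
        norm_num
        nlinarith [h27]
      have hB2 : 1/2 ≤ B := by
        rw [hq] at hB
        linarith
      have hA1 : 0 < rexp (-(M+1)^2/2) / Real.sqrt (2*π) := by
        apply div_pos (Real.exp_pos _)
        exact Real.sqrt_pos.2 (by positivity)
      have hA0 : 0 < A := lt_of_lt_of_le hA1 hA
      have hB0 : 0 < B := by linarith
      -- log bounds
      have hlogA : -(M+1)^2/2 - Real.log (Real.sqrt (2*π)) ≤ Real.log A := by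
        calc -(M+1)^2/2 - Real.log (Real.sqrt (2*π))
            = Real.log (rexp (-(M+1)^2/2) / Real.sqrt (2*π)) := by
              rw [Real.log_div (Real.exp_ne_zero _)
                (ne_of_gt (Real.sqrt_pos.2 (by positivity))), Real.log_exp]
          _ ≤ Real.log A := Real.log_le_log hA1 hA
      have hlogB : -2 * ((n:ℝ)^3)⁻¹ ≤ Real.log B := by
        calc -2 * ((n:ℝ)^3)⁻¹ ≤ Real.log (1 - ((n:ℝ)^3)⁻¹) :=
              log_one_sub_ge (by positivity) hn3inv
          _ ≤ Real.log B := Real.log_le_log (by linarith) (by rw [hq] at hB; exact hB)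
      have hnlogB : -2 ≤ (n:ℝ) * Real.log B := by
        have h1 : (n:ℝ) * (-2 * ((n:ℝ)^3)⁻¹) ≤ (n:ℝ) * Real.log B :=
          mul_le_mul_of_nonneg_left hlogB (by positivity)
        have h2 : -2 ≤ (n:ℝ) * (-2 * ((n:ℝ)^3)⁻¹) := by
          have hx : (n:ℝ) * ((n:ℝ)^3)⁻¹ ≤ 1 := by
            rw [show (n:ℝ) * ((n:ℝ)^3)⁻¹ = (n:ℝ) / (n:ℝ)^3 by ring, div_le_one (by positivity)]
            have h9 : (9:ℝ) ≤ (n:ℝ)^2 := by nlinarith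
            nlinarith
          nlinarith
        linarith
      have hlogP : -(g n) ≤ Real.log (((Measure.pi fun _ : Fin (n+1) =>
          gaussianReal 0 1) T).toReal) := by
        have hAB : 0 < A * B^n := by positivity
        calc -(g n) = (-(M+1)^2/2 - Real.log (Real.sqrt (2*π))) + (-2) := by
              rw [hg, hc, hMdef, htdef]
              ring
          _ ≤ Real.log A + (n:ℝ) * Real.log B := by
              linarith [hlogA, hnlogB]
          _ = Real.log (A * B^n) := by
              rw [Real.log_mul (ne_of_gt hA0) (by positivity), Real.log_pow]
          _ ≤ _ := Real.log_le_log hAB hPA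
      have hsq : (0:ℝ) < Real.sqrt n := Real.sqrt_pos.2 hn0
      have : -(g n) / Real.sqrt n ≤ f n := by
        rw [hf]
        simp only
        rw [← hTdef]
        exact div_le_div_of_nonneg_right hlogP hsq.le
      calc -(g n / Real.sqrt n) = -(g n) / Real.sqrt n := by ring
        _ ≤ f n := this
    · -- upper bound: f n ≤ 0
      filter_upwards with n
      have hP1 : ((Measure.pi fun _ : Fin (n+1) => gaussianReal 0 1)
          {a : Fin (n + 1) → ℝ | ∀ x : ℝ, 0 < x → x < Real.log n / (6 * n) →
            0 < ∑ i : Fin (n + 1), (n.choose i : ℝ) * a i * x ^ (i : ℕ)}).toReal ≤ 1 := by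
        calc _ ≤ (1 : ℝ≥0∞).toReal := ENNReal.toReal_mono ENNReal.one_ne_top prob_le_one
          _ = 1 := ENNReal.toReal_one
      have hlog := Real.log_nonpos ENNReal.toReal_nonneg hP1
      rw [hf]
      exact div_nonpos_of_nonpos_of_nonneg hlog (Real.sqrt_nonneg _)
  rw [key.liminf_eq]
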